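/- Weak duality v(P) ≥ v(D̄^F) holds if and only if K ∩ B ⊆ epi (f − g + δ_A)^c ∩ B, where K = ⋂_{(u*,v*,γ)∈dom g^c} ⋃_{(x*,y*,α)∈dom δ_A^c} { epi (f − c(·,(−x*,−y*,α)))^c − (u*,0,0, g^c(u*,v*,γ) − δ_A^c(x*,y*,α)) } and B = {(0,0)} × ℝ_{++} × ℝ. -/

import Mathlib

noncomputable section
open Classical

/-- The space `W = X* × X* × ℝ` of the c-conjugation scheme. -/
abbrev W (X : Type*) [AddCommGroup X] [Module ℝ X] [TopologicalSpace X] : Type _ :=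
  (X →L[ℝ] ℝ) × (X →L[ℝ] ℝ) × ℝ

variable {X : Type*} [AddCommGroup X] [Module ℝ X] [TopologicalSpace X]

/-- The coupling function `c(x,(x*,y*,α)) = ⟨x,x*⟩` if `⟨x,y*⟩ < α`, `+∞` otherwise. -/
def cpl (x : X) (w : W X) : EReal :=
  if w.2.1 x < w.2.2 then ((w.1 x : ℝ) : EReal) else ⊤

/-- The c-conjugate `f^c(w) = sup_x { c(x,w) − f(x) }`. -/
def cConj (f : X → EReal) (w : W X) : EReal := ⨆ x : X, cpl x w - f x

/-- The c'-conjugate `h^{c'}(x) = sup_w { c'(w,x) − h(w) }`. -/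
def cpConj (h : W X → EReal) (x : X) : EReal := ⨆ w : W X, cpl x w - h w

/-- Subtraction with the DC convention `(+∞) − (+∞) = +∞`. -/
def dcSub (a b : EReal) : EReal := if a = ⊤ then ⊤ else a - b

/-- Indicator function `δ_A`. -/
def indic (A : Set X) (x : X) : EReal := if x ∈ A then (0 : EReal) else ⊤

/-- Epigraph of a function on `W`. -/
def epiW (h : W X → EReal) : Set (W X × ℝ) := {p | h p.1 ≤ (p.2 : EReal)}

/-- Effective domain. -/
def domE {α : Type*} (f : α → EReal) : Set α := {x | f x ≠ ⊤}

/-- The inner expression of the Fenchel-type dual problems. -/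
def dualExpr (f g : X → EReal) (A : Set X) (z w : W X) : EReal :=
  cConj g w - cConj f (w.1 - z.1, -z.2.1, z.2.2) - cConj (indic A) z

/-- The set `Z = X* × X* × ℝ_{++}`. -/
def Zset (X : Type*) [AddCommGroup X] [Module ℝ X] [TopologicalSpace X] : Set (W X) :=
  {z | 0 < z.2.2}

/-- Primal optimal value `v(P) = inf_X { f − g + δ_A }`. -/
def vP (f g : X → EReal) (A : Set X) : EReal := ⨅ x : X, dcSub (f x) (g x) + indic A x

/-- Dual optimal value `v(D^F)`. -/
def vDF (f g : X → EReal) (A : Set X) : EReal :=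
  ⨆ z ∈ Zset X, ⨅ w ∈ domE (cConj g), dualExpr f g A z w

/-- Dual optimal value `v(D̄^F)`. -/
def vDbarF (f g : X → EReal) (A : Set X) : EReal :=
  ⨅ w ∈ domE (cConj g), ⨆ z ∈ Zset X, dualExpr f g A z w

/-- The set `Ω`. -/
def OmegaSet (f g : X → EReal) (A : Set X) : Set (W X × ℝ) :=
  ⋃ z ∈ domE (cConj (indic A)), ⋂ w ∈ domE (cConj g),
    (fun p : W X × ℝ =>
        p - ((w.1, 0, 0), (cConj g w).toReal - (cConj (indic A) z).toReal)) ''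
      epiW (cConj (fun x => dcSub (f x) (cpl x (-z.1, -z.2.1, z.2.2))))

/-- The set `K`. -/
def Kset (f g : X → EReal) (A : Set X) : Set (W X × ℝ) :=
  ⋂ w ∈ domE (cConj g), ⋃ z ∈ domE (cConj (indic A)),
    (fun p : W X × ℝ =>
        p - ((w.1, 0, 0), (cConj g w).toReal - (cConj (indic A) z).toReal)) ''
      epiW (cConj (fun x => dcSub (f x) (cpl x (-z.1, -z.2.1, z.2.2))))

/-- The set `B = {(0,0)} × ℝ_{++} × ℝ`. -/
def Bset (X : Type*) [AddCommGroup X] [Module ℝ X] [TopologicalSpace X] :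
    Set (W X × ℝ) :=
  {p | p.1.1 = 0 ∧ p.1.2.1 = 0 ∧ 0 < p.1.2.2}

/-- Properness of an extended-real-valued function. -/
def ProperFn {α : Type*} (f : α → EReal) : Prop := (∀ x, f x ≠ ⊥) ∧ ∃ x, f x ≠ ⊤

/-- Convexity of an extended-real-valued function via its epigraph. -/
def ConvexFn (f : X → EReal) : Prop := Convex ℝ {p : X × ℝ | f p.1 ≤ (p.2 : EReal)}

/-- Evenly convex set. -/
def EvenlyConvexSet {Y : Type*} [AddCommGroup Y] [Module ℝ Y] [TopologicalSpace Y]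
    (C : Set Y) : Prop :=
  ∀ y0 ∉ C, ∃ φ : Y →L[ℝ] ℝ, ∀ y ∈ C, φ (y - y0) < 0

/-- Evenly convex function: its epigraph is an evenly convex subset of `X × ℝ`. -/
def EConvexFn (f : X → EReal) : Prop :=
  EvenlyConvexSet {p : X × ℝ | f p.1 ≤ (p.2 : EReal)}


lemma cpl_zero (x : X) {β : ℝ} (hβ : 0 < β) (u : X →L[ℝ] ℝ) :
    cpl x (u, 0, β) = (u x : EReal) := by
  simp [cpl, hβ]

lemma cpl_ne_bot (x : X) (w : W X) : cpl x w ≠ ⊥ := by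
  unfold cpl; split <;> simp

lemma pointwiseA (f : X → EReal) (z : W X) (u : X →L[ℝ] ℝ) {β : ℝ} (hβ : 0 < β) (x : X) :
    cpl x (u, 0, β) - dcSub (f x) (cpl x (-z.1, -z.2.1, z.2.2))
      = cpl x (u - z.1, -z.2.1, z.2.2) - f x := by
  rw [cpl_zero x hβ]
  unfold cpl dcSub
  simp only [ContinuousLinearMap.neg_apply, ContinuousLinearMap.sub_apply]
  by_cases h : -(z.2.1 x) < z.2.2
  · simp only [h, if_pos]
    generalize f x = a
    induction a using EReal.rec with
    | bot =>
      simp [EReal.bot_sub, ← EReal.coe_sub, EReal.coe_sub_bot]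
    | coe t =>
      simp only [EReal.coe_ne_top, if_false, ← EReal.coe_neg, ← EReal.coe_sub]
      norm_cast; ring
    | top =>
      simp [EReal.sub_top]
  · simp only [h, if_neg, not_false_iff]
    generalize f x = a
    induction a using EReal.rec with
    | bot =>
      simp [EReal.bot_sub, EReal.coe_sub_bot, EReal.top_sub_bot, EReal.sub_top]
    | coe t =>
      simp [EReal.sub_top, EReal.coe_sub_bot, EReal.top_sub_coe]
    | top =>
      simp [EReal.sub_top]

lemma conjA (f : X → EReal) (z : W X) (u : X →L[ℝ] ℝ) {β : ℝ} (hβ : 0 < β) :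
    cConj (fun x => dcSub (f x) (cpl x (-z.1, -z.2.1, z.2.2))) (u, 0, β)
      = cConj f (u - z.1, -z.2.1, z.2.2) :=
  iSup_congr fun x => pointwiseA f z u hβ x

/-- monotonicity of `f^c` in the last coordinate (antitone). -/
lemma cConj_anti (f : X → EReal) (u y : X →L[ℝ] ℝ) {α α' : ℝ} (h : α ≤ α') :
    cConj f (u, y, α') ≤ cConj f (u, y, α) := by
  refine iSup_mono fun x => EReal.sub_le_sub ?_ le_rfl
  unfold cpl
  simp only
  by_cases hx : y x < α
  · rw [if_pos (lt_of_lt_of_le hx h), if_pos hx]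
  · rw [if_neg hx]; exact le_top

lemma cConj_ne_bot {f : X → EReal} (hf : ProperFn f) (w : W X) : cConj f w ≠ ⊥ := by
  obtain ⟨hb, x0, ht⟩ := hf
  have h1 : cpl x0 w - f x0 ≤ cConj f w := le_iSup (fun x => cpl x w - f x) x0
  intro hc
  rw [hc, le_bot_iff] at h1
  lift f x0 to ℝ using ⟨ht, hb x0⟩ with t
  unfold cpl at h1
  split at h1
  · rw [← EReal.coe_sub] at h1; exact EReal.coe_ne_bot _ h1
  · rw [EReal.top_sub_coe] at h1; simp at h1

lemma indic_conj_ne_bot (A : Set X) (hA : A.Nonempty) (z : W X) :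
    cConj (indic A) z ≠ ⊥ := by
  obtain ⟨x0, hx0⟩ := hA
  have h1 : cpl x0 z - indic A x0 ≤ cConj (indic A) z :=
    le_iSup (fun x => cpl x z - indic A x) x0
  intro hc
  rw [hc, le_bot_iff] at h1
  rw [indic, if_pos hx0, sub_zero] at h1
  exact cpl_ne_bot x0 z h1

/-- membership in `domE (cConj (indic A))` forces the strict inequality on `A`. -/
lemma domE_indic_lt {A : Set X} {z : W X} (hz : z ∈ domE (cConj (indic A)))
    {x : X} (hx : x ∈ A) : z.2.1 x < z.2.2 := by
  by_contra hlt
  apply hz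
  have h1 : cpl x z - indic A x ≤ cConj (indic A) z :=
    le_iSup (fun y => cpl y z - indic A y) x
  rw [indic, if_pos hx, sub_zero, cpl, if_neg hlt] at h1
  exact top_le_iff.mp h1

/-- replacing the last coordinate by 1 doesn't change `δ_A^c` when `z.2.2 ≤ 0`. -/
lemma indic_conj_fix {A : Set X} {z : W X} (hz : z ∈ domE (cConj (indic A)))
    (hneg : z.2.2 ≤ 0) :
    cConj (indic A) (z.1, z.2.1, (1:ℝ)) = cConj (indic A) z := by
  refine iSup_congr fun x => ?_
  by_cases hx : x ∈ A
  · have h1 := domE_indic_lt hz hx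
    rw [cpl, cpl]
    simp only
    rw [if_pos (lt_of_lt_of_le h1 (hneg.trans zero_le_one)), if_pos h1]
  · rw [indic, if_neg hx, EReal.sub_top, EReal.sub_top]

lemma arith (a : EReal) (ha : a ≠ ⊥) (c d s : ℝ) :
    a ≤ ((c - d - s : ℝ) : EReal) ↔ ((s : ℝ) : EReal) ≤ ((c : ℝ) : EReal) - a - ((d : ℝ) : EReal) := by
  induction a using EReal.rec with
  | bot => exact absurd rfl ha
  | coe t =>
    rw [← EReal.coe_sub, ← EReal.coe_sub, EReal.coe_le_coe_iff, EReal.coe_le_coe_iff]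
    constructor <;> intro <;> linarith
  | top =>
    simp only [EReal.sub_top, EReal.bot_sub, le_bot_iff, top_le_iff]
    constructor
    · intro h; exact absurd h (EReal.coe_ne_top _)
    · intro h; exact absurd h (EReal.coe_ne_bot _)

/-- Proposition 4.1(ii): weak duality `v(P) ≥ v(D̄^F)` holds iff
`K ∩ B ⊆ epi (f−g+δ_A)^c ∩ B`. -/
theorem prop41_ii
    {X : Type*} [AddCommGroup X] [Module ℝ X] [TopologicalSpace X]
    (f g : X → EReal) (A : Set X) (hA : A.Nonempty)
    (hf : ProperFn f) (hfc : ConvexFn f) (hg : ProperFn g) (hgc : ConvexFn g)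
    (hdom : domE f ⊆ domE g) :
    vDbarF f g A ≤ vP f g A ↔
      Kset f g A ∩ Bset X ⊆
        epiW (cConj (fun x => dcSub (f x) (g x) + indic A x)) ∩ Bset X := by
  constructor
  · rintro hwd p ⟨hpK, hpB⟩
    obtain ⟨h1, h2, h3⟩ := hpB
    refine ⟨?_, h1, h2, h3⟩
    -- main claim : -p.2 ≤ vP
    have key : ((-p.2 : ℝ) : EReal) ≤ vP f g A := by
      have main : ∀ s : ℝ, (s : EReal) < ((-p.2 : ℝ) : EReal) → (s : EReal) ≤ vP f g A := by
        intro s hs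
        refine le_trans ?_ hwd
        rw [vDbarF]
        refine le_iInf₂ fun w hw => ?_
        simp only [Kset, Set.mem_iInter, Set.mem_iUnion, Set.mem_image] at hpK
        obtain ⟨z, hzdom, q, hq_epi, hq_eq⟩ := hpK w hw
        rw [sub_eq_iff_eq_add] at hq_eq
        set cw := (cConj g w).toReal with hcw
        set dz := (cConj (indic A) z).toReal with hdz
        have hq1 : q.1 = (w.1, (0 : X →L[ℝ] ℝ), p.1.2.2) := by
          rw [hq_eq]
          refine Prod.ext ?_ (Prod.ext ?_ ?_) <;> simp [h1, h2]
        have hq2 : q.2 = p.2 + (cw - dz) := by rw [hq_eq]; simp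
        have hepi : cConj f (w.1 - z.1, -z.2.1, z.2.2) ≤ ((p.2 + (cw - dz) : ℝ) : EReal) := by
          have h0 : cConj (fun x => dcSub (f x) (cpl x (-z.1, -z.2.1, z.2.2))) q.1
              ≤ ((q.2 : ℝ) : EReal) := hq_epi
          rw [hq1, conjA f z w.1 h3, hq2] at h0
          exact h0
        obtain ⟨z', hz'pos, hz'd, hz'f⟩ :
            ∃ z' : W X, 0 < z'.2.2 ∧ cConj (indic A) z' = cConj (indic A) z ∧
              cConj f (w.1 - z'.1, -z'.2.1, z'.2.2) ≤ cConj f (w.1 - z.1, -z.2.1, z.2.2) := by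
          by_cases hzz : 0 < z.2.2
          · exact ⟨z, hzz, rfl, le_rfl⟩
          · push_neg at hzz
            exact ⟨(z.1, z.2.1, 1), one_pos, indic_conj_fix hzdom hzz,
              cConj_anti f _ _ (hzz.trans zero_le_one)⟩
        have hgw : cConj g w = ((cw : ℝ) : EReal) :=
          (EReal.coe_toReal hw (cConj_ne_bot hg w)).symm
        have hdzz : cConj (indic A) z' = ((dz : ℝ) : EReal) := by
          rw [hz'd]
          exact (EReal.coe_toReal hzdom (indic_conj_ne_bot A hA z)).symm
        have ha : cConj f (w.1 - z'.1, -z'.2.1, z'.2.2) ≠ ⊥ := cConj_ne_bot hf _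
        have hle : cConj f (w.1 - z'.1, -z'.2.1, z'.2.2) ≤ ((cw - dz - (-p.2) : ℝ) : EReal) := by
          refine le_trans (hz'f.trans hepi) ?_
          norm_cast
          linarith
        have hfin : ((-p.2 : ℝ) : EReal) ≤ dualExpr f g A z' w := by
          rw [dualExpr, hgw, hdzz]
          exact (arith _ ha cw dz (-p.2)).mp hle
        refine le_trans (le_of_lt hs) (le_trans hfin ?_)
        exact le_biSup (fun z => dualExpr f g A z w) (show z' ∈ Zset X from hz'pos)
      by_contra hc
      push_neg at hc
      obtain ⟨q, hq1, hq2⟩ := EReal.exists_rat_btwn_of_lt hc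
      exact absurd (main q hq2) (not_le.mpr hq1)
    -- now conclude membership in the epigraph
    rw [epiW, Set.mem_setOf_eq, cConj]
    refine iSup_le fun x => ?_
    have hcpl : cpl x p.1 = 0 := by
      rw [cpl, if_pos]
      · rw [h1]; simp
      · rw [h2]; simpa using h3
    rw [hcpl, sub_eq_add_neg, zero_add]
    have hx : ((-p.2 : ℝ) : EReal) ≤ dcSub (f x) (g x) + indic A x :=
      le_trans key (iInf_le _ x)
    rw [EReal.coe_neg] at hx
    exact EReal.neg_le.mp hx
  · intro hincl
    by_contra hlt
    push_neg at hlt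
    obtain ⟨s, hs1, hs2⟩ := EReal.exists_rat_btwn_of_lt hlt
    set p : W X × ℝ := (((0 : X →L[ℝ] ℝ), (0 : X →L[ℝ] ℝ), (1 : ℝ)), -(s : ℝ)) with hp
    have hpB : p ∈ Bset X := ⟨rfl, rfl, one_pos⟩
    have hpK : p ∈ Kset f g A := by
      simp only [Kset, Set.mem_iInter, Set.mem_iUnion, Set.mem_image]
      intro w hw
      have hsw : ((s : ℝ) : EReal) < ⨆ z ∈ Zset X, dualExpr f g A z w :=
        lt_of_lt_of_le hs2 (iInf₂_le w hw)
      rw [lt_iSup_iff] at hsw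
      obtain ⟨z, hz⟩ := hsw
      rw [lt_iSup_iff] at hz
      obtain ⟨hzZ, hE⟩ := hz
      set cw := (cConj g w).toReal with hcw
      set dz := (cConj (indic A) z).toReal with hdz
      have hgw : cConj g w = ((cw : ℝ) : EReal) :=
        (EReal.coe_toReal hw (cConj_ne_bot hg w)).symm
      have hdz_ne_top : cConj (indic A) z ≠ ⊤ := by
        intro h
        rw [dualExpr, h, EReal.sub_top] at hE
        exact not_lt_bot hE
      have hdzz : cConj (indic A) z = ((dz : ℝ) : EReal) :=
        (EReal.coe_toReal hdz_ne_top (indic_conj_ne_bot A hA z)).symm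
      have ha : cConj f (w.1 - z.1, -z.2.1, z.2.2) ≠ ⊥ := cConj_ne_bot hf _
      have hale : cConj f (w.1 - z.1, -z.2.1, z.2.2) ≤ ((cw - dz - s : ℝ) : EReal) := by
        refine (arith _ ha cw dz s).mpr ?_
        rw [dualExpr, hgw, hdzz] at hE
        exact le_of_lt hE
      refine ⟨z, hdz_ne_top, ((w.1, 0, 1), -(s : ℝ) + (cw - dz)), ?_, ?_⟩
      · show cConj _ (w.1, (0 : X →L[ℝ] ℝ), (1 : ℝ)) ≤ ((-(s : ℝ) + (cw - dz) : ℝ) : EReal)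
        rw [conjA f z w.1 one_pos]
        have heq : (-(s : ℝ) + (cw - dz) : ℝ) = cw - dz - s := by ring
        rw [heq]
        exact hale
      · refine Prod.ext (Prod.ext ?_ (Prod.ext ?_ ?_)) ?_ <;> simp [hp, ← hdz]
    obtain ⟨hepi, -⟩ := hincl ⟨hpK, hpB⟩
    have hfin : ((s : ℝ) : EReal) ≤ vP f g A := by
      rw [vP]
      refine le_iInf fun x => ?_
      rw [epiW, Set.mem_setOf_eq, cConj] at hepi
      have hx : cpl x p.1 - (dcSub (f x) (g x) + indic A x) ≤ ((p.2 : ℝ) : EReal) :=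
        le_trans (le_iSup (fun y => cpl y p.1 - (dcSub (f y) (g y) + indic A y)) x) hepi
      have hcpl : cpl x p.1 = 0 := by
        rw [cpl, if_pos]
        · simp [hp]
        · simp [hp]
      rw [hcpl, sub_eq_add_neg, zero_add] at hx
      have hps : (p.2 : EReal) = -((s : ℝ) : EReal) := by
        rw [hp]; simp [EReal.coe_neg]
      rw [hps] at hx
      exact EReal.neg_le_neg_iff.mp hx
    exact absurd hfin (not_le.mpr hs1)

end
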